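/- Let ℓ be an odd prime, let G be a subgroup of GL₂(ℤ/ℓℤ), let H be a twist of G, and let M be one of Z(ℓ), C_s(ℓ), C_ns(ℓ), N_s(ℓ), N_ns(ℓ). Then G belongs to M if and only if H belongs to M. -/

import Mathlib

open Matrix

abbrev GL2 (ℓ : ℕ) : Type := GL (Fin 2) (ZMod ℓ)

namespace Paper

/-- The underlying matrix of an element of `GL₂(ℤ/ℓℤ)`. -/
def mat {ℓ : ℕ} (g : GL2 ℓ) : Matrix (Fin 2) (Fin 2) (ZMod ℓ) := ↑g

/-- The set of scalar matrices `Z(ℓ)`. -/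
def ZSet (ℓ : ℕ) : Set (GL2 ℓ) :=
  { g | ∃ x : ZMod ℓ, mat g = x • (1 : Matrix (Fin 2) (Fin 2) (ZMod ℓ)) }

/-- The split Cartan `C_s(ℓ)`: invertible diagonal matrices. -/
def CsSet (ℓ : ℕ) : Set (GL2 ℓ) := { g | mat g 0 1 = 0 ∧ mat g 1 0 = 0 }

/-- The normalizer `N_s(ℓ)` of the split Cartan: diagonal and antidiagonal matrices. -/
def NsSet (ℓ : ℕ) : Set (GL2 ℓ) :=
  CsSet ℓ ∪ { g | mat g 0 0 = 0 ∧ mat g 1 1 = 0 }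

/-- The nonsplit Cartan `C_ns(ℓ)` relative to the nonsquare `ε`. -/
def CnsSet (ℓ : ℕ) (ε : ZMod ℓ) : Set (GL2 ℓ) :=
  { g | ∃ x y : ZMod ℓ, mat g = !![x, ε * y; y, x] }

/-- The normalizer `N_ns(ℓ)` of the nonsplit Cartan. -/
def NnsSet (ℓ : ℕ) (ε : ZMod ℓ) : Set (GL2 ℓ) :=
  CnsSet ℓ ε ∪ { g | ∃ x y : ZMod ℓ, mat g = !![x, -(ε * y); y, -x] }

/-- The ramified Cartan `C_r(ℓ)`. -/
def CrSet (ℓ : ℕ) : Set (GL2 ℓ) :=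
  { g | mat g 1 0 = 0 ∧ mat g 0 0 = mat g 1 1 }

/-- The Borel subgroup `B(ℓ)`: upper triangular matrices. -/
def BorelSet (ℓ : ℕ) : Set (GL2 ℓ) := { g | mat g 1 0 = 0 }

/-- `G` is conjugate in `GL₂(ℤ/ℓℤ)` to a subgroup of the set `M`. -/
def ConjSub {ℓ : ℕ} (G : Subgroup (GL2 ℓ)) (M : Set (GL2 ℓ)) : Prop :=
  ∃ a : GL2 ℓ, ∀ g ∈ G, a * g * a⁻¹ ∈ M

/-- `G` belongs to `Z(ℓ)`. -/
def BelongsZ {ℓ : ℕ} (G : Subgroup (GL2 ℓ)) : Prop := ConjSub G (ZSet ℓ)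

/-- `G` belongs to `C_s(ℓ)`. -/
def BelongsCs {ℓ : ℕ} (G : Subgroup (GL2 ℓ)) : Prop :=
  ConjSub G (CsSet ℓ) ∧ ¬ ConjSub G (ZSet ℓ)

/-- `G` belongs to `C_ns(ℓ)`. -/
def BelongsCns {ℓ : ℕ} (ε : ZMod ℓ) (G : Subgroup (GL2 ℓ)) : Prop :=
  ConjSub G (CnsSet ℓ ε) ∧ ¬ ConjSub G (ZSet ℓ)

/-- `G` belongs to `N_s(ℓ)`. -/
def BelongsNs {ℓ : ℕ} (G : Subgroup (GL2 ℓ)) : Prop :=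
  ConjSub G (NsSet ℓ) ∧ ¬ ConjSub G (CsSet ℓ)

/-- `G` belongs to `N_ns(ℓ)`. -/
def BelongsNns {ℓ : ℕ} (ε : ZMod ℓ) (G : Subgroup (GL2 ℓ)) : Prop :=
  ConjSub G (NnsSet ℓ ε) ∧ ¬ ConjSub G (CnsSet ℓ ε)

/-- `G` belongs to the ramified Cartan `C_r(ℓ)`. -/
def BelongsCr {ℓ : ℕ} (G : Subgroup (GL2 ℓ)) : Prop :=
  ConjSub G (CrSet ℓ) ∧ ¬ ConjSub G (ZSet ℓ)

/-- `H` is a twist of `G`: either `H = ⟨G, -I⟩`, or `H` is an index-2 subgroup of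
`⟨G, -I⟩` not containing `-I`. -/
def TwistOf {ℓ : ℕ} (G H : Subgroup (GL2 ℓ)) : Prop :=
  H = G ⊔ Subgroup.closure {(-1 : GL2 ℓ)} ∨
    (H ≤ G ⊔ Subgroup.closure {(-1 : GL2 ℓ)} ∧
      H.relIndex (G ⊔ Subgroup.closure {(-1 : GL2 ℓ)}) = 2 ∧
      (-1 : GL2 ℓ) ∉ H)

/-- `H` fixes a nonzero vector of `(ℤ/ℓℤ)²`. -/
def FixesVec {ℓ : ℕ} (H : Subgroup (GL2 ℓ)) : Prop :=
  ∃ v : Fin 2 → ZMod ℓ, v ≠ 0 ∧ ∀ h ∈ H, Matrix.mulVec (mat h) v = v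

lemma mat_neg {ℓ : ℕ} (g : GL2 ℓ) : mat (-g) = -(mat g) := Units.val_neg g

lemma inv_neg_gl {ℓ : ℕ} (a : GL2 ℓ) : (-a)⁻¹ = -a⁻¹ := by
  apply inv_eq_of_mul_eq_one_right
  rw [neg_mul_neg, mul_inv_cancel]

/-- The saturation of `G` under negation, as a subgroup. -/
def negSat {ℓ : ℕ} (G : Subgroup (GL2 ℓ)) : Subgroup (GL2 ℓ) where
  carrier := {x | x ∈ G ∨ -x ∈ G}
  one_mem' := Or.inl G.one_mem
  mul_mem' := by
    rintro a b (ha | ha) (hb | hb)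
    · exact Or.inl (G.mul_mem ha hb)
    · exact Or.inr (by rw [← mul_neg]; exact G.mul_mem ha hb)
    · exact Or.inr (by rw [← neg_mul]; exact G.mul_mem ha hb)
    · exact Or.inl (by rw [← neg_mul_neg a b]; exact G.mul_mem ha hb)
  inv_mem' := by
    rintro a (ha | ha)
    · exact Or.inl (G.inv_mem ha)
    · exact Or.inr (by rw [← inv_neg_gl]; exact G.inv_mem ha)

lemma sup_le_negSat {ℓ : ℕ} (G : Subgroup (GL2 ℓ)) :
    G ⊔ Subgroup.closure {(-1 : GL2 ℓ)} ≤ negSat G := by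
  refine sup_le (fun x hx => Or.inl hx) ?_
  rw [Subgroup.closure_le]
  rintro x hx
  rcases Set.mem_singleton_iff.1 hx with rfl
  exact Or.inr (by simpa using G.one_mem)

lemma conjSub_sup_iff {ℓ : ℕ} {G : Subgroup (GL2 ℓ)} {M : Set (GL2 ℓ)}
    (hM : ∀ g ∈ M, -g ∈ M) :
    ConjSub (G ⊔ Subgroup.closure {(-1 : GL2 ℓ)}) M ↔ ConjSub G M := by
  constructor
  · rintro ⟨a, ha⟩
    exact ⟨a, fun g hg => ha g (Subgroup.mem_sup_left hg)⟩
  · rintro ⟨a, ha⟩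
    refine ⟨a, fun g hg => ?_⟩
    rcases sup_le_negSat G hg with h | h
    · exact ha g h
    · have h2 := hM _ (ha (-g) h)
      simpa [neg_mul, mul_neg, neg_neg] using h2

lemma twist_sup_eq {ℓ : ℕ} {G H : Subgroup (GL2 ℓ)} (h : TwistOf G H) :
    H ⊔ Subgroup.closure {(-1 : GL2 ℓ)} = G ⊔ Subgroup.closure {(-1 : GL2 ℓ)} := by
  rcases h with rfl | ⟨hle, hidx, hneg⟩
  · rw [sup_assoc, sup_idem]
  · set K := G ⊔ Subgroup.closure {(-1 : GL2 ℓ)} with hK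
    set L := H ⊔ Subgroup.closure {(-1 : GL2 ℓ)} with hL
    have hneg1 : (-1 : GL2 ℓ) ∈ K :=
      Subgroup.mem_sup_right (Subgroup.subset_closure rfl)
    have hLK : L ≤ K :=
      sup_le hle ((Subgroup.closure_le _).2 (Set.singleton_subset_iff.2 hneg1))
    have hHL : H ≤ L := le_sup_left
    have hmul := Subgroup.relIndex_mul_relIndex H L K hHL hLK
    rw [hidx] at hmul
    have hd : H.relIndex L ∣ 2 := ⟨_, hmul.symm⟩
    rcases (Nat.prime_two.eq_one_or_self_of_dvd _ hd) with h1 | h2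
    · exfalso
      have : L ≤ H := Subgroup.relIndex_eq_one.1 h1
      exact hneg (this (Subgroup.mem_sup_right (Subgroup.subset_closure rfl)))
    · have hb : L.relIndex K = 1 := by rw [h2] at hmul; omega
      exact le_antisymm hLK (Subgroup.relIndex_eq_one.1 hb)

lemma negClosed_Z {ℓ : ℕ} : ∀ g ∈ ZSet ℓ, -g ∈ ZSet ℓ := by
  rintro g ⟨x, hx⟩
  exact ⟨-x, by rw [mat_neg, hx, neg_smul]⟩

lemma negClosed_Cs {ℓ : ℕ} : ∀ g ∈ CsSet ℓ, -g ∈ CsSet ℓ := by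
  rintro g ⟨h1, h2⟩
  constructor <;> simp [mat_neg, Matrix.neg_apply, h1, h2]

lemma negClosed_Ns {ℓ : ℕ} : ∀ g ∈ NsSet ℓ, -g ∈ NsSet ℓ := by
  rintro g (hg | ⟨h1, h2⟩)
  · exact Or.inl (negClosed_Cs g hg)
  · exact Or.inr (by constructor <;> simp [mat_neg, Matrix.neg_apply, h1, h2])

lemma negClosed_Cns {ℓ : ℕ} (ε : ZMod ℓ) : ∀ g ∈ CnsSet ℓ ε, -g ∈ CnsSet ℓ ε := by
  rintro g ⟨x, y, hxy⟩
  refine ⟨-x, -y, ?_⟩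
  rw [mat_neg, hxy]
  ext i j
  fin_cases i <;> fin_cases j <;> simp [Matrix.neg_apply]

lemma negClosed_Nns {ℓ : ℕ} (ε : ZMod ℓ) : ∀ g ∈ NnsSet ℓ ε, -g ∈ NnsSet ℓ ε := by
  rintro g (hg | ⟨x, y, hxy⟩)
  · exact Or.inl (negClosed_Cns ε g hg)
  · refine Or.inr ⟨-x, -y, ?_⟩
    rw [mat_neg, hxy]
    ext i j
    fin_cases i <;> fin_cases j <;> simp [Matrix.neg_apply]

lemma conjSub_twist {ℓ : ℕ} {G H : Subgroup (GL2 ℓ)} (hGH : TwistOf G H)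
    {M : Set (GL2 ℓ)} (hM : ∀ g ∈ M, -g ∈ M) :
    ConjSub G M ↔ ConjSub H M := by
  rw [← conjSub_sup_iff (G := G) hM, ← conjSub_sup_iff (G := H) hM, twist_sup_eq hGH]

end Paper

theorem statement_0 (ℓ : ℕ) (hℓ : Nat.Prime ℓ) (hodd : Odd ℓ) (ε : ZMod ℓ)
    (hε : ∀ t : ZMod ℓ, t ^ 2 ≠ ε) (G H : Subgroup (GL2 ℓ)) (hGH : Paper.TwistOf G H) :
    (Paper.BelongsZ G ↔ Paper.BelongsZ H) ∧
    (Paper.BelongsCs G ↔ Paper.BelongsCs H) ∧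
    (Paper.BelongsCns ε G ↔ Paper.BelongsCns ε H) ∧
    (Paper.BelongsNs G ↔ Paper.BelongsNs H) ∧
    (Paper.BelongsNns ε G ↔ Paper.BelongsNns ε H) := by
  refine ⟨Paper.conjSub_twist hGH Paper.negClosed_Z, ?_, ?_, ?_, ?_⟩
  · exact and_congr (Paper.conjSub_twist hGH Paper.negClosed_Cs)
      (not_congr (Paper.conjSub_twist hGH Paper.negClosed_Z))
  · exact and_congr (Paper.conjSub_twist hGH (Paper.negClosed_Cns ε))
      (not_congr (Paper.conjSub_twist hGH Paper.negClosed_Z))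
  · exact and_congr (Paper.conjSub_twist hGH Paper.negClosed_Ns)
      (not_congr (Paper.conjSub_twist hGH Paper.negClosed_Cs))
  · exact and_congr (Paper.conjSub_twist hGH (Paper.negClosed_Nns ε))
      (not_congr (Paper.conjSub_twist hGH (Paper.negClosed_Cns ε)))
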